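/- Suppose f^[α] ∈ I^[Σ] is not top s-reducible by G^[Σ]. Then every regular S-polynomial formed between f^[α] and any element of G^[Σ] ∪ {f^[α]} has signature strictly larger than s(α). -/

import Mathlib

open Finsupp

/-- The free algebra `K⟨X⟩`, realized as the monoid algebra of the free monoid. -/
abbrev FreeAlg (K X : Type*) [Field K] := MonoidAlgebra K (FreeMonoid X)

/-- Module monomials `a εᵢ b` of the free bimodule of rank `r`. -/
structure MonMod (X : Type*) (r : ℕ) where
  left : FreeMonoid X
  idx : Fin r
  right : FreeMonoid X

/-- The free bimodule `Σ = (K⟨X⟩ ⊗ K⟨X⟩)^r`, realized as the span of module monomials. -/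
abbrev FreeBimod (K X : Type*) [Field K] (r : ℕ) := MonMod X r →₀ K

/-- Two-sided action of a pair of words on a module monomial: `a·(c εᵢ d)·b = (ac) εᵢ (db)`. -/
def act {X : Type*} {r : ℕ} (a b : FreeMonoid X) (μ : MonMod X r) : MonMod X r :=
  ⟨a * μ.left, μ.idx, μ.right * b⟩

/-- The monomial `w` as an element of the free algebra. -/
noncomputable def mon (K : Type*) [Field K] {X : Type*} (w : FreeMonoid X) : FreeAlg K X :=
  MonoidAlgebra.of K (FreeMonoid X) w

/-- The evaluation homomorphism `Σ → K⟨X⟩`, `εᵢ ↦ fᵢ`. -/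
noncomputable def evalS {K X : Type*} [Field K] {r : ℕ} (F : Fin r → FreeAlg K X)
    (α : FreeBimod K X r) : FreeAlg K X :=
  α.sum fun μ c => c • (mon K μ.left * F μ.idx * mon K μ.right)

section Orders

variable {K X : Type*} [Field K] [LinearOrder (FreeMonoid X)] {r : ℕ}
  [LinearOrder (MonMod X r)]

/-- The signature of a module element: the largest module monomial of its support
(`⊥` for the zero element). -/
noncomputable def sigW (α : FreeBimod K X r) : WithBot (MonMod X r) := α.support.max

/-- The leading monomial of a nonzero polynomial (junk value `1` for `0`). -/
noncomputable def lmon (p : FreeAlg K X) : FreeMonoid X :=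
  if h : p.coeff.support.Nonempty then p.coeff.support.max' h else 1

/-- The leading coefficient. -/
noncomputable def lcoeff (p : FreeAlg K X) : K := p.coeff (lmon p)

/-- The leading term. -/
noncomputable def lterm (p : FreeAlg K X) : FreeAlg K X :=
  MonoidAlgebra.single (lmon p) (lcoeff p)

/-- `f^[α]` is top s-reducible by the set `G^[Σ]`. -/
def TopSRed (G : Set (FreeAlg K X × FreeBimod K X r)) (f : FreeAlg K X)
    (α : FreeBimod K X r) : Prop :=
  ∃ g γ, (g, γ) ∈ G ∧ g ≠ 0 ∧ ∃ a b : FreeMonoid X,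
    a * lmon g * b = lmon f ∧ WithBot.map (act a b) (sigW γ) ≤ sigW α

/-- `f^[α]` is singular top s-reducible by `G^[Σ]`. -/
def SingTopSRed (G : Set (FreeAlg K X × FreeBimod K X r)) (f : FreeAlg K X)
    (α : FreeBimod K X r) : Prop :=
  f ≠ 0 ∧ ∃ g γ, (g, γ) ∈ G ∧ g ≠ 0 ∧ ∃ a b : FreeMonoid X,
    a * lmon g * b = lmon f ∧ WithBot.map (act a b) (sigW γ) = sigW α

/-- `f^[α]` admits a regular s-reduction by `G^[Σ]`. -/
def RegSRedible (G : Set (FreeAlg K X × FreeBimod K X r)) (f : FreeAlg K X)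
    (α : FreeBimod K X r) : Prop :=
  ∃ g γ, (g, γ) ∈ G ∧ g ≠ 0 ∧ ∃ a b : FreeMonoid X,
    a * lmon g * b ∈ f.coeff.support ∧ WithBot.map (act a b) (sigW γ) < sigW α

/-- `f^[α]` admits a regular *top* s-reduction by `G^[Σ]`. -/
def RegTopSRedible (G : Set (FreeAlg K X × FreeBimod K X r)) (f : FreeAlg K X)
    (α : FreeBimod K X r) : Prop :=
  f ≠ 0 ∧ ∃ g γ, (g, γ) ∈ G ∧ g ≠ 0 ∧ ∃ a b : FreeMonoid X,
    a * lmon g * b = lmon f ∧ WithBot.map (act a b) (sigW γ) < sigW α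

/-- Result of one s-reduction step of `f^[α]` by `a g^[γ] b`. -/
noncomputable def sredResult (f : FreeAlg K X) (α : FreeBimod K X r)
    (g : FreeAlg K X) (γ : FreeBimod K X r) (a b : FreeMonoid X) :
    FreeAlg K X × FreeBimod K X r :=
  (f - (f.coeff (a * lmon g * b) * (lcoeff g)⁻¹) • (mon K a * g * mon K b),
   α - (f.coeff (a * lmon g * b) * (lcoeff g)⁻¹) • Finsupp.mapDomain (act a b) γ)

/-- One s-reduction step by `G^[Σ]`. -/
def SRedStep (G : Set (FreeAlg K X × FreeBimod K X r))
    (p q : FreeAlg K X × FreeBimod K X r) : Prop :=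
  ∃ g γ, (g, γ) ∈ G ∧ g ≠ 0 ∧ ∃ a b : FreeMonoid X,
    a * lmon g * b ∈ p.1.coeff.support ∧ WithBot.map (act a b) (sigW γ) ≤ sigW p.2 ∧
    q = sredResult p.1 p.2 g γ a b

/-- One *regular* s-reduction step by `G^[Σ]`. -/
def RegSRedStep (G : Set (FreeAlg K X × FreeBimod K X r))
    (p q : FreeAlg K X × FreeBimod K X r) : Prop :=
  ∃ g γ, (g, γ) ∈ G ∧ g ≠ 0 ∧ ∃ a b : FreeMonoid X,
    a * lmon g * b ∈ p.1.coeff.support ∧ WithBot.map (act a b) (sigW γ) < sigW p.2 ∧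
    q = sredResult p.1 p.2 g γ a b

/-- `p` s-reduces to zero by `G^[Σ]`. -/
def SRedToZero (G : Set (FreeAlg K X × FreeBimod K X r))
    (p : FreeAlg K X × FreeBimod K X r) : Prop :=
  ∃ σ : FreeBimod K X r, Relation.ReflTransGen (SRedStep G) p (0, σ)

/-- `p` regular s-reduces to zero by `G^[Σ]`. -/
def RegSRedToZero (G : Set (FreeAlg K X × FreeBimod K X r))
    (p : FreeAlg K X × FreeBimod K X r) : Prop :=
  ∃ σ : FreeBimod K X r, Relation.ReflTransGen (RegSRedStep G) p (0, σ)

/-- `G^[Σ] ⊆ I^[Σ]`: labelled polynomials with nonzero polynomial part. -/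
def InLab (F : Fin r → FreeAlg K X) (G : Set (FreeAlg K X × FreeBimod K X r)) : Prop :=
  ∀ p ∈ G, p.1 = evalS F p.2 ∧ p.1 ≠ 0

/-- `G^[Σ]` is a labelled Gröbner basis of `I^[Σ]`. -/
def LabGB (F : Fin r → FreeAlg K X) (G : Set (FreeAlg K X × FreeBimod K X r)) : Prop :=
  InLab F G ∧ ∀ (f : FreeAlg K X) (α : FreeBimod K X r), f = evalS F α → SRedToZero G (f, α)

/-- `G^[Σ]` is a labelled Gröbner basis of `I^[Σ]` up to signature `σ`. -/
def LabGBUpTo (F : Fin r → FreeAlg K X) (G : Set (FreeAlg K X × FreeBimod K X r))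
    (σ : MonMod X r) : Prop :=
  InLab F G ∧ ∀ (f : FreeAlg K X) (α : FreeBimod K X r), f = evalS F α →
    sigW α < (σ : WithBot (MonMod X r)) → SRedToZero G (f, α)

/-- `G^[Σ]` is a *minimal* labelled Gröbner basis of `I^[Σ]`. -/
def MinLabGB (F : Fin r → FreeAlg K X) (G : Set (FreeAlg K X × FreeBimod K X r)) : Prop :=
  LabGB F G ∧ ∀ p ∈ G, ¬ TopSRed (G \ {p}) p.1 p.2

end Orders

/-- `σ` is the (module part of the) regular S-polynomial of a regular overlap or
inclusion ambiguity of `f^[α]` and `g^[β]` (with `f` on the left). -/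
def RegSPol {K X : Type*} [Field K] [LinearOrder (FreeMonoid X)] {r : ℕ}
    [LinearOrder (MonMod X r)]
    (f : FreeAlg K X) (α : FreeBimod K X r) (g : FreeAlg K X) (β : FreeBimod K X r)
    (σ : FreeBimod K X r) : Prop :=
  (∃ A B C : FreeMonoid X, A ≠ 1 ∧ B ≠ 1 ∧ C ≠ 1 ∧ lmon f = A * B ∧ lmon g = B * C ∧
      WithBot.map (act 1 C) (sigW α) ≠ WithBot.map (act A 1) (sigW β) ∧
      σ = (lcoeff f)⁻¹ • Finsupp.mapDomain (act 1 C) α -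
          (lcoeff g)⁻¹ • Finsupp.mapDomain (act A 1) β) ∨
  (∃ A C : FreeMonoid X, f ≠ g ∧ lmon f = A * lmon g * C ∧
      sigW α ≠ WithBot.map (act A C) (sigW β) ∧
      σ = (lcoeff f)⁻¹ • α - (lcoeff g)⁻¹ • Finsupp.mapDomain (act A C) β)


section AuxLemmas

variable {K X : Type*} [Field K] {r : ℕ}

lemma act_injective (a b : FreeMonoid X) : Function.Injective (act (r := r) a b) := by
  rintro ⟨l1, i1, r1⟩ ⟨l2, i2, r2⟩ h
  simp only [act, MonMod.mk.injEq] at h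
  exact MonMod.mk.injEq .. ▸ ⟨mul_left_cancel h.1, h.2.1, mul_right_cancel h.2.2⟩

lemma act_act (a b : FreeMonoid X) (μ : MonMod X r) :
    act a 1 (act 1 b μ) = act a b μ := by simp [act]

lemma act_one_one (μ : MonMod X r) : act (1 : FreeMonoid X) 1 μ = μ := by simp [act]

lemma act_eq_self {a b : FreeMonoid X} {μ : MonMod X r} (h : act a b μ = μ) :
    a = 1 ∧ b = 1 := by
  obtain ⟨l, i, rr⟩ := μ
  simp only [act, MonMod.mk.injEq] at h
  constructor
  · have : a * l = 1 * l := by rw [h.1, one_mul]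
    exact mul_right_cancel this
  · have : rr * b = rr * 1 := by rw [h.2.2, mul_one]
    exact mul_left_cancel this

set_option linter.unusedSectionVars false

variable [LinearOrder (FreeMonoid X)] [WellFoundedLT (FreeMonoid X)]
  [LinearOrder (MonMod X r)]

lemma one_le_word (hmon : ∀ a b u v : FreeMonoid X, u ≤ v → a * u * b ≤ a * v * b)
    (u : FreeMonoid X) : (1 : FreeMonoid X) ≤ u := by
  by_contra h
  push_neg at h
  have hdec : ∀ n : ℕ, u ^ (n + 1) < u ^ n := by
    intro n
    have hle : u ^ n * u * 1 ≤ u ^ n * 1 * 1 := hmon _ _ _ _ h.le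
    simp only [mul_one] at hle
    rw [pow_succ]
    refine lt_of_le_of_ne hle (fun he => ?_)
    have : u = 1 := mul_left_cancel (he.trans (mul_one _).symm)
    exact absurd this (by rintro rfl; exact absurd h (lt_irrefl 1))
  exact (RelEmbedding.wellFounded_iff_isEmpty.mp
    (wellFounded_lt (α := FreeMonoid X))).false (RelEmbedding.natGT _ hdec)

lemma le_act (hmon : ∀ a b u v : FreeMonoid X, u ≤ v → a * u * b ≤ a * v * b)
    (hmod : ∀ (a b : FreeMonoid X) (μ ν : MonMod X r), μ ≤ ν → act a b μ ≤ act a b ν)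
    (hcomp : ∀ (u v : FreeMonoid X) (i : Fin r),
      (u ≤ v ↔ (⟨u, i, 1⟩ : MonMod X r) ≤ ⟨v, i, 1⟩) ∧
      (u ≤ v ↔ (⟨1, i, u⟩ : MonMod X r) ≤ ⟨1, i, v⟩))
    (a b : FreeMonoid X) (μ : MonMod X r) : μ ≤ act a b μ := by
  have step1 : ∀ ν : MonMod X r, ν ≤ act 1 b ν := by
    intro ν
    have h1 : ν.right ≤ ν.right * b := by
      have := hmon ν.right 1 1 b (one_le_word hmon b); simpa using this
    have h2 : (⟨1, ν.idx, ν.right⟩ : MonMod X r) ≤ ⟨1, ν.idx, ν.right * b⟩ :=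
      ((hcomp ν.right (ν.right * b) ν.idx).2).mp h1
    have h3 := hmod ν.left 1 _ _ h2
    simpa [act] using h3
  have step2 : ∀ ν : MonMod X r, ν ≤ act a 1 ν := by
    intro ν
    have h1 : ν.left ≤ a * ν.left := by
      have := hmon 1 ν.left 1 a (one_le_word hmon a); simpa using this
    have h2 : (⟨ν.left, ν.idx, 1⟩ : MonMod X r) ≤ ⟨a * ν.left, ν.idx, 1⟩ :=
      ((hcomp ν.left (a * ν.left) ν.idx).1).mp h1
    have h3 := hmod 1 ν.right _ _ h2
    simpa [act] using h3
  calc μ ≤ act 1 b μ := step1 μ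
    _ ≤ act a 1 (act 1 b μ) := step2 _
    _ = act a b μ := act_act a b μ

lemma sigW_smul {c : K} (hc : c ≠ 0) (x : FreeBimod K X r) : sigW (c • x) = sigW x := by
  unfold sigW
  rw [Finsupp.support_smul_eq hc]

lemma sigW_mapDomain {φ : MonMod X r → MonMod X r} (hinj : Function.Injective φ)
    (hmono : Monotone φ) (x : FreeBimod K X r) :
    sigW (Finsupp.mapDomain φ x) = WithBot.map φ (sigW x) := by
  classical
  unfold sigW
  rw [Finsupp.mapDomain_support_of_injective hinj]
  rcases x.support.eq_empty_or_nonempty with h | h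
  · simp [h]
  · rw [← Finset.coe_max' (h.image φ), ← Finset.coe_max' h, Finset.max'_image hmono,
      WithBot.map_coe]

lemma sigW_neg (x : FreeBimod K X r) : sigW (-x) = sigW x := by
  unfold sigW; rw [Finsupp.support_neg]

lemma le_sigW_sub_of_lt {x y : FreeBimod K X r} (h : sigW y < sigW x) :
    sigW x ≤ sigW (x - y) := by
  obtain ⟨m, hm⟩ : ∃ m : MonMod X r, sigW x = ↑m := by
    rcases eq_or_ne (sigW x) ⊥ with hb | hb
    · exact absurd (hb ▸ h) (by simp)
    · exact ⟨(sigW x).unbot hb, (WithBot.coe_unbot _ hb).symm⟩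
  have hm' : x.support.max = (m : WithBot (MonMod X r)) := by unfold sigW at hm; exact hm
  have hmem : m ∈ x.support := Finset.mem_of_max hm'
  have hym : y m = 0 := by
    by_contra hy
    have : (m : WithBot (MonMod X r)) ≤ sigW y := by
      unfold sigW; exact Finset.le_max (Finsupp.mem_support_iff.mpr hy)
    exact absurd (this.trans_lt h) (by simp [hm])
  have : (x - y) m ≠ 0 := by
    rw [Finsupp.sub_apply, hym, sub_zero]
    exact Finsupp.mem_support_iff.mp hmem
  rw [hm]
  unfold sigW
  exact Finset.le_max (Finsupp.mem_support_iff.mpr this)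

lemma max_sigW_le_sub {x y : FreeBimod K X r} (h : sigW x ≠ sigW y) :
    max (sigW x) (sigW y) ≤ sigW (x - y) := by
  rcases h.lt_or_gt with hlt | hlt
  · rw [max_eq_right hlt.le]
    have heq : sigW (x - y) = sigW (y - x) := by rw [← sigW_neg (y - x), neg_sub]
    rw [heq]
    exact le_sigW_sub_of_lt hlt
  · rw [max_eq_left hlt.le]
    exact le_sigW_sub_of_lt hlt

lemma lcoeff_ne_zero {p : FreeAlg K X} (hp : p ≠ 0) : lcoeff p ≠ 0 := by
  have hs : p.coeff.support.Nonempty :=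
    Finsupp.support_nonempty_iff.mpr (mt MonoidAlgebra.coeff_eq_zero.mp hp)
  have hmem : lmon p ∈ p.coeff.support := by
    rw [lmon, dif_pos hs]; exact p.coeff.support.max'_mem hs
  simpa [lcoeff] using Finsupp.mem_support_iff.mp hmem

end AuxLemmas

/-- If `f^[α] ∈ I^[Σ]` is not top s-reducible by `G^[Σ]`, then every regular
S-polynomial formed between `f^[α]` and any element of `G^[Σ] ∪ {f^[α]}` has signature
strictly larger than `s(α)`. -/
theorem sig_spol_gt_of_not_topSRed {K X : Type*} [Field K] {r : ℕ}
    [LinearOrder (FreeMonoid X)] [WellFoundedLT (FreeMonoid X)]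
    [LinearOrder (MonMod X r)] [WellFoundedLT (MonMod X r)]
    (hmon : ∀ a b u v : FreeMonoid X, u ≤ v → a * u * b ≤ a * v * b)
    (hmod : ∀ (a b : FreeMonoid X) (μ ν : MonMod X r), μ ≤ ν → act a b μ ≤ act a b ν)
    (hcomp : ∀ (u v : FreeMonoid X) (i : Fin r),
      (u ≤ v ↔ (⟨u, i, 1⟩ : MonMod X r) ≤ ⟨v, i, 1⟩) ∧
      (u ≤ v ↔ (⟨1, i, u⟩ : MonMod X r) ≤ ⟨1, i, v⟩))
    (F : Fin r → FreeAlg K X) (G : Set (FreeAlg K X × FreeBimod K X r))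
    (hG : InLab F G)
    (f : FreeAlg K X) (α : FreeBimod K X r)
    (hf : f = evalS F α) (hf0 : f ≠ 0)
    (hnotred : ¬ TopSRed G f α) :
    ∀ (g : FreeAlg K X) (β σ : FreeBimod K X r), ((g, β) ∈ G ∨ (g, β) = (f, α)) →
      (RegSPol f α g β σ ∨ RegSPol g β f α σ) → sigW α < sigW σ := by
  intro g β σ hmem hsp
  classical
  have hα0 : α ≠ 0 := by
    rintro rfl
    exact hf0 (by rw [hf]; simp [evalS])
  obtain ⟨μ, hμ⟩ : ∃ μ : MonMod X r, sigW α = ↑μ := by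
    have hs : α.support.Nonempty := Finsupp.support_nonempty_iff.mpr hα0
    exact ⟨α.support.max' hs, by unfold sigW; exact (Finset.coe_max' hs).symm⟩
  have hg0 : g ≠ 0 := by
    rcases hmem with h | h
    · exact (hG _ h).2
    · injection h with h1 h2; rw [h1]; exact hf0
  have hcf : (lcoeff f)⁻¹ ≠ 0 := inv_ne_zero (lcoeff_ne_zero hf0)
  have hcg : (lcoeff g)⁻¹ ≠ 0 := inv_ne_zero (lcoeff_ne_zero hg0)
  have hmono : ∀ a b : FreeMonoid X, Monotone (act (r := r) a b) :=
    fun a b μ' ν' h => hmod a b μ' ν' h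
  have esig : ∀ (c : K), c ≠ 0 → ∀ (a b : FreeMonoid X) (x : FreeBimod K X r),
      sigW (c • Finsupp.mapDomain (act a b) x) = WithBot.map (act a b) (sigW x) := by
    intro c hc a b x
    rw [sigW_smul hc, sigW_mapDomain (act_injective a b) (hmono a b)]
  rcases hsp with hsp | hsp
  · rcases hsp with ⟨A, B, C, hA, hB, hC, hlf, hlg, hreg, hσ⟩ | ⟨A, C, hfg, hlf, hreg, hσ⟩
    · -- overlap ambiguity, f on the left
      have e1 := esig _ hcf 1 C α
      have e2 := esig _ hcg A 1 β
      have hmax : max (WithBot.map (act 1 C) (sigW α)) (WithBot.map (act A 1) (sigW β))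
          ≤ sigW σ := by
        rw [hσ]
        have h := max_sigW_le_sub (x := (lcoeff f)⁻¹ • Finsupp.mapDomain (act 1 C) α)
          (y := (lcoeff g)⁻¹ • Finsupp.mapDomain (act A 1) β) (by rw [e1, e2]; exact hreg)
        rwa [e1, e2] at h
      have hlt : sigW α < WithBot.map (act 1 C) (sigW α) := by
        rw [hμ, WithBot.map_coe, WithBot.coe_lt_coe]
        exact lt_of_le_of_ne (le_act hmon hmod hcomp 1 C μ)
          (fun h => hC (act_eq_self h.symm).2)
      exact hlt.trans_le ((le_max_left _ _).trans hmax)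
    · -- inclusion ambiguity, f on the left
      have hmemG : (g, β) ∈ G := by
        rcases hmem with h | h
        · exact h
        · injection h with h1 h2; exact absurd h1.symm hfg
      have e2 := esig _ hcg A C β
      have e1 : sigW ((lcoeff f)⁻¹ • α) = sigW α := sigW_smul hcf α
      have hmax : max (sigW α) (WithBot.map (act A C) (sigW β)) ≤ sigW σ := by
        rw [hσ]
        have h := max_sigW_le_sub (x := (lcoeff f)⁻¹ • α)
          (y := (lcoeff g)⁻¹ • Finsupp.mapDomain (act A C) β) (by rw [e1, e2]; exact hreg)
        rwa [e1, e2] at h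
      have hlt : sigW α < WithBot.map (act A C) (sigW β) := by
        by_contra hle
        push_neg at hle
        exact hnotred ⟨g, β, hmemG, hg0, A, C, hlf.symm, hle⟩
      exact hlt.trans_le ((le_max_right _ _).trans hmax)
  · rcases hsp with ⟨A, B, C, hA, hB, hC, hlg, hlf, hreg, hσ⟩ | ⟨A, C, hgf, hlg, hreg, hσ⟩
    · -- overlap ambiguity, f on the right
      have e1 := esig _ hcg 1 C β
      have e2 := esig _ hcf A 1 α
      have hmax : max (WithBot.map (act 1 C) (sigW β)) (WithBot.map (act A 1) (sigW α))
          ≤ sigW σ := by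
        rw [hσ]
        have h := max_sigW_le_sub (x := (lcoeff g)⁻¹ • Finsupp.mapDomain (act 1 C) β)
          (y := (lcoeff f)⁻¹ • Finsupp.mapDomain (act A 1) α) (by rw [e1, e2]; exact hreg)
        rwa [e1, e2] at h
      have hlt : sigW α < WithBot.map (act A 1) (sigW α) := by
        rw [hμ, WithBot.map_coe, WithBot.coe_lt_coe]
        exact lt_of_le_of_ne (le_act hmon hmod hcomp A 1 μ)
          (fun h => hA (act_eq_self h.symm).1)
      exact hlt.trans_le ((le_max_right _ _).trans hmax)
    · -- inclusion ambiguity, f on the right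
      have hmemG : (g, β) ∈ G := by
        rcases hmem with h | h
        · exact h
        · injection h with h1 h2; exact absurd h1 hgf
      have e2 := esig _ hcf A C α
      have e1 : sigW ((lcoeff g)⁻¹ • β) = sigW β := sigW_smul hcg β
      have hmax : max (sigW β) (WithBot.map (act A C) (sigW α)) ≤ sigW σ := by
        rw [hσ]
        have h := max_sigW_le_sub (x := (lcoeff g)⁻¹ • β)
          (y := (lcoeff f)⁻¹ • Finsupp.mapDomain (act A C) α) (by rw [e1, e2]; exact hreg)
        rwa [e1, e2] at h
      by_cases hAC : A = 1 ∧ C = 1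
      · obtain ⟨rfl, rfl⟩ := hAC
        have hβα : ¬ sigW β ≤ sigW α := by
          intro hle
          apply hnotred
          refine ⟨g, β, hmemG, hg0, 1, 1, ?_, ?_⟩
          · rw [one_mul, mul_one, hlg, one_mul, mul_one]
          · have hid : WithBot.map (act (1 : FreeMonoid X) 1) (sigW β) = sigW β := by
              cases hb : sigW β with
              | bot => rfl
              | coe ν => rw [WithBot.map_coe, act_one_one]
            rw [hid]; exact hle
        exact (not_le.mp hβα).trans_le ((le_max_left _ _).trans hmax)
      · have hlt : sigW α < WithBot.map (act A C) (sigW α) := by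
          rw [hμ, WithBot.map_coe, WithBot.coe_lt_coe]
          exact lt_of_le_of_ne (le_act hmon hmod hcomp A C μ)
            (fun h => hAC (act_eq_self h.symm))
        exact hlt.trans_le ((le_max_right _ _).trans hmax)
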